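/- arXiv:1809.05121 — 4 statements merged into one kernel-verified Lean document; each statement's English description precedes it below -/
import Mathlib

section
/- Let A be a ring, P an arbitrary cochain complex of right A-modules, and Q a bounded cochain complex of projective right A-modules such that Q^i = 0 for all i ≤ q. Then every morphism Q → P in the derived category D(Mod A) factors through the canonical inclusion σ_{>q}P → P of the stupid truncation. -/
open CategoryTheory Limits HomologicalComplex

universe w v u

section NullHomotopy

variable {C : Type u} [Category.{v} C] [Abelian C]

lemma stupidTrunc_ext_step {K Y : CochainComplex C ℤ} (a : K ⟶ Y) (q : ℤ)
    (hproj : ∀ i : ℤ, Projective (K.X i))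
    (hKlow : ∀ i : ℤ, i ≤ q → IsZero (K.X i))
    (hY : ∀ i : ℤ, q < i → Y.ExactAt i)
    (j : ℤ) (pn : K.X (j + 1) ⟶ Y.X j)
    (hpn : a.f j ≫ Y.d j (j + 1) = K.d j (j + 1) ≫ pn ≫ Y.d j (j + 1)) :
    ∃ p : K.X j ⟶ Y.X (j - 1),
      a.f j = K.d j (j + 1) ≫ pn + p ≫ Y.d (j - 1) j := by
  by_cases hj : j ≤ q
  · exact ⟨0, (hKlow j hj).eq_of_src _ _⟩
  · push_neg at hj
    have hE : (Y.sc' (j - 1) j (j + 1)).Exact := by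
      rw [← Y.exactAt_iff' (j - 1) j (j + 1) (by simp) (by simp)]
      exact hY j hj
    have := hproj j
    have hu0 : (a.f j - K.d j (j + 1) ≫ pn) ≫ (Y.sc' (j - 1) j (j + 1)).g = 0 := by
      change (a.f j - K.d j (j + 1) ≫ pn) ≫ Y.d j (j + 1) = 0
      rw [Preadditive.sub_comp, hpn, Category.assoc]
      simp
    refine ⟨hE.liftFromProjective _ hu0, ?_⟩
    have h2 := hE.liftFromProjective_comp _ hu0
    change hE.liftFromProjective _ hu0 ≫ Y.d (j - 1) j = a.f j - K.d j (j + 1) ≫ pn at h2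
    exact (show a.f j = K.d j (j + 1) ≫ pn + (a.f j - K.d j (j + 1) ≫ pn) by abel).trans
      (congrArg _ h2.symm)

/-- The commutation property of a partial nullhomotopy. -/
def HtpyComm {K Y : CochainComplex C ℤ} (a : K ⟶ Y)
    (h : ∀ i : ℤ, K.X i ⟶ Y.X (i - 1)) (i : ℤ) : Prop :=
  a.f i = K.d i (i + 1) ≫ (h (i + 1) ≫
      eqToHom (congrArg Y.X (show i + 1 - 1 = i by omega))) + h i ≫ Y.d (i - 1) i

lemma stupidTrunc_exists_family {K Y : CochainComplex C ℤ} (a : K ⟶ Y) (q b : ℤ)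
    (hproj : ∀ i : ℤ, Projective (K.X i))
    (hKlow : ∀ i : ℤ, i ≤ q → IsZero (K.X i))
    (hKhigh : ∀ i : ℤ, b < i → IsZero (K.X i))
    (hY : ∀ i : ℤ, q < i → Y.ExactAt i) :
    ∃ h : ∀ i : ℤ, K.X i ⟶ Y.X (i - 1), ∀ i : ℤ, HtpyComm a h i := by
  set P : ℤ → Prop := fun k =>
    ∃ h : ∀ i : ℤ, K.X i ⟶ Y.X (i - 1), ∀ i : ℤ, k ≤ i → HtpyComm a h i with hP
  -- base case
  have base : ∀ k : ℤ, b < k → P k := by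
    intro k hk
    exact ⟨fun _ => 0, fun i hi => (hKhigh i (by omega)).eq_of_src _ _⟩
  -- downward step
  have step : ∀ j : ℤ, P (j + 1) → P j := by
    intro j ⟨h, hcomm⟩
    have hd : eqToHom (congrArg Y.X (show j + 1 - 1 = j by omega)) ≫ Y.d j (j + 1) =
        Y.d (j + 1 - 1) (j + 1) := by
      have : ∀ (p : ℤ) (e : p = j), eqToHom (congrArg Y.X e) ≫ Y.d j (j + 1) =
          Y.d p (j + 1) := by rintro p rfl; simp
      exact this (j + 1 - 1) (by omega)
    have hpn : a.f j ≫ Y.d j (j + 1) = K.d j (j + 1) ≫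
        (h (j + 1) ≫ eqToHom (congrArg Y.X (show j + 1 - 1 = j by omega))) ≫
          Y.d j (j + 1) := by
      have hnat : a.f j ≫ Y.d j (j + 1) = K.d j (j + 1) ≫ a.f (j + 1) := a.comm j (j + 1)
      rw [hnat, show a.f (j + 1) = _ from hcomm (j + 1) (le_refl _), Preadditive.comp_add]
      simp only [Category.assoc]
      rw [hd]
      simp
    obtain ⟨p, hp⟩ := stupidTrunc_ext_step a q hproj hKlow hY j _ hpn
    refine ⟨fun i => if e : i = j then
        eqToHom (congrArg K.X e) ≫ p ≫ eqToHom (congrArg Y.X (by rw [e])) else h i, ?_⟩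
    intro i hi
    by_cases hij : i = j
    · subst hij
      rw [HtpyComm]
      rw [dif_pos rfl, dif_neg (by omega : i + 1 ≠ i)]
      simpa using hp
    · have hi' : j + 1 ≤ i := by omega
      rw [HtpyComm, dif_neg hij, dif_neg (by omega : i + 1 ≠ j)]
      exact hcomm i hi'
  -- conclude P k for every k
  have all : ∀ k : ℤ, P k := by
    intro k
    by_cases hk : b < k
    · exact base k hk
    · have main : ∀ (n : ℕ) (k : ℤ), k = b + 1 - n → P k := by
        intro n
        induction n with
        | zero => intro k hk; exact base k (by omega)
        | succ n ih =>
            intro k hk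
            have : k = (k + 1) - 1 := by omega
            exact step k (ih (k + 1) (by push_cast at hk ⊢; omega))
      exact main (b + 1 - k).toNat k (by omega)
  obtain ⟨h, hcomm⟩ := all (q + 1)
  refine ⟨h, fun i => ?_⟩
  by_cases hi : q + 1 ≤ i
  · exact hcomm i hi
  · exact (hKlow i (by omega)).eq_of_src _ _

/-- A chain map from a complex of projectives vanishing in degrees ≤ q to a complex
that is exact in degrees > q is nullhomotopic, provided the source is bounded above. -/
noncomputable def stupidTrunc_nullHomotopy {K Y : CochainComplex C ℤ} (a : K ⟶ Y) (q b : ℤ)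
    (hproj : ∀ i : ℤ, Projective (K.X i))
    (hKlow : ∀ i : ℤ, i ≤ q → IsZero (K.X i))
    (hKhigh : ∀ i : ℤ, b < i → IsZero (K.X i))
    (hY : ∀ i : ℤ, q < i → Y.ExactAt i) :
    Homotopy a 0 := by
  have hfam := stupidTrunc_exists_family a q b hproj hKlow hKhigh hY
  let h := hfam.choose
  have hcomm : ∀ i : ℤ, HtpyComm a h i := hfam.choose_spec
  exact
    { hom := fun i j => if e : j + 1 = i then
        h i ≫ eqToHom (congrArg Y.X (show i - 1 = j by omega)) else 0
      zero := by
        intro i j hij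
        rw [dif_neg]
        intro e
        exact hij e
      comm := by
        intro i
        have h1 : dNext i (fun i j => if e : j + 1 = i then
            h i ≫ eqToHom (congrArg Y.X (show i - 1 = j by omega)) else 0) =
            K.d i (i + 1) ≫ (h (i + 1) ≫
              eqToHom (congrArg Y.X (show i + 1 - 1 = i by omega))) := by
          rw [dNext_eq _ (show (ComplexShape.up ℤ).Rel i (i + 1) by simp)]
          rw [dif_pos rfl]
        have h2 : prevD i (fun i j => if e : j + 1 = i then
            h i ≫ eqToHom (congrArg Y.X (show i - 1 = j by omega)) else 0) =
            h i ≫ Y.d (i - 1) i := by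
          rw [prevD_eq _ (show (ComplexShape.up ℤ).Rel (i - 1) i by simp)]
          rw [dif_pos (by omega)]
          have : ∀ (p : ℤ) (e : i - 1 = p), (h i ≫ eqToHom (congrArg Y.X e)) ≫ Y.d p i =
              h i ≫ Y.d (i - 1) i := by rintro p rfl; simp
          exact this (i - 1) rfl
        rw [h1, h2]
        simpa [HtpyComm] using hcomm i }

end NullHomotopy

section DerivedVanishing
variable {C : Type u} [Category.{v} C] [Abelian C] [HasDerivedCategory.{w} C]

lemma stupidTrunc_derivedHom_zero (K M : CochainComplex C ℤ) (q b : ℤ)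
    (hproj : ∀ i : ℤ, Projective (K.X i))
    (hKlow : ∀ i : ℤ, i ≤ q → IsZero (K.X i))
    (hKhigh : ∀ i : ℤ, b < i → IsZero (K.X i))
    (hM : ∀ i : ℤ, q < i → M.ExactAt i)
    (φ : DerivedCategory.Q.obj K ⟶ DerivedCategory.Q.obj M) : φ = 0 := by
  have e := DerivedCategory.quotientCompQhIso C
  set ψ : DerivedCategory.Qh.obj ((HomotopyCategory.quotient C (ComplexShape.up ℤ)).obj K) ⟶
      DerivedCategory.Qh.obj ((HomotopyCategory.quotient C (ComplexShape.up ℤ)).obj M) :=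
    e.hom.app K ≫ φ ≫ e.inv.app M with hψ
  suffices hψ0 : ψ = 0 by
    have : φ = e.inv.app K ≫ ψ ≫ e.hom.app M := by
      rw [hψ]
      simp
    rw [this, hψ0, zero_comp, comp_zero]
  -- left calculus of fractions
  have : (HomotopyCategory.quasiIso C (ComplexShape.up ℤ)).HasLeftCalculusOfFractions := by
    rw [HomotopyCategory.quasiIso_eq_subcategoryAcyclic_W]
    infer_instance
  obtain ⟨lf, hlf⟩ := Localization.exists_leftFraction DerivedCategory.Qh
    (HomotopyCategory.quasiIso C (ComplexShape.up ℤ)) ψ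
  obtain ⟨α, hα⟩ := (HomotopyCategory.quotient C (ComplexShape.up ℤ)).map_surjective
    (X := K) (Y := lf.Y'.as) lf.f
  obtain ⟨σ, hσ⟩ := (HomotopyCategory.quotient C (ComplexShape.up ℤ)).map_surjective
    (X := M) (Y := lf.Y'.as) lf.s
  have hqis : HomologicalComplex.quasiIso C (ComplexShape.up ℤ) σ := by
    rw [← HomotopyCategory.quotient_map_mem_quasiIso_iff, hσ]
    exact lf.hs
  rw [HomologicalComplex.mem_quasiIso_iff] at hqis
  have hYex : ∀ i : ℤ, q < i → lf.Y'.as.ExactAt i := by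
    intro i hi
    rw [exactAt_iff_isZero_homology]
    have h1 : IsZero (M.homology i) := by
      rw [← exactAt_iff_isZero_homology]
      exact hM i hi
    have h2 : IsIso (homologyMap σ i) := by
      have := hqis
      rw [quasiIso_iff] at this
      have := this i
      rw [quasiIsoAt_iff_isIso_homologyMap] at this
      exact this
    exact IsZero.of_iso h1 (asIso (homologyMap σ i)).symm
  -- α is nullhomotopic
  have hα0 : lf.f = 0 := by
    rw [← hα]
    have H := stupidTrunc_nullHomotopy α q b hproj hKlow hKhigh hYex
    rw [HomotopyCategory.eq_of_homotopy _ _ H]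
    exact (HomotopyCategory.quotient C (ComplexShape.up ℤ)).map_zero _ _
  have hs : IsIso (DerivedCategory.Qh.map lf.s) :=
    Localization.inverts DerivedCategory.Qh
      (HomotopyCategory.quasiIso C (ComplexShape.up ℤ)) _ lf.hs
  rw [hlf, ← cancel_mono (DerivedCategory.Qh.map lf.s), zero_comp,
    MorphismProperty.LeftFraction.map_comp_map_s, hα0, Functor.map_zero]
end DerivedVanishing





/-! STATEMENT 2: Let A be a ring, P an arbitrary cochain complex of right A-modules, and
Q a bounded cochain complex of projective right A-modules such that Q^i = 0 for all i ≤ q.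
Then every morphism Q → P in the derived category D(Mod A) factors through the canonical
inclusion σ_{>q}P → P of the stupid truncation.

Right A-modules are formalized as modules over `Aᵐᵒᵖ`. The stupid truncation `σ_{>q}P` is
formalized as any subcomplex `T ⟶ P` whose components vanish in degrees ≤ q and whose
structure map is an isomorphism in each degree > q; this characterizes the canonical
degreewise-split inclusion `σ_{>q}P → P` up to canonical isomorphism. -/

open CategoryTheory Limits


theorem morphism_from_bounded_projective_factors_through_stupid_truncation
    (A : Type u) [Ring A] [HasDerivedCategory (ModuleCat.{u} Aᵐᵒᵖ)]
    (P Qc : CochainComplex (ModuleCat.{u} Aᵐᵒᵖ) ℤ) (q : ℤ)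
    -- Qc is a bounded complex of projective modules:
    (hQ_bdd : ∃ a b : ℤ, ∀ i : ℤ, (i < a ∨ b < i) → IsZero (Qc.X i))
    (hQ_proj : ∀ i : ℤ, Module.Projective Aᵐᵒᵖ (Qc.X i))
    -- Qc vanishes in degrees ≤ q:
    (hQ_low : ∀ i : ℤ, i ≤ q → IsZero (Qc.X i))
    -- T, together with ι : T ⟶ P, is the stupid truncation σ_{>q}P with its canonical
    -- inclusion into P:
    (T : CochainComplex (ModuleCat.{u} Aᵐᵒᵖ) ℤ) (ι : T ⟶ P)
    (hT_low : ∀ i : ℤ, i ≤ q → IsZero (T.X i))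
    (hι : ∀ i : ℤ, q < i → IsIso (ι.f i))
    (f : DerivedCategory.Q.obj Qc ⟶ DerivedCategory.Q.obj P) :
    ∃ g : DerivedCategory.Q.obj Qc ⟶ DerivedCategory.Q.obj T,
      f = g ≫ DerivedCategory.Q.map ι := by
  obtain ⟨a, b, hab⟩ := hQ_bdd
  have hproj : ∀ i : ℤ, Projective (Qc.X i) := fun i =>
    (IsProjective.iff_projective (Qc.X i)).1 (hQ_proj i)
  have hQ_high : ∀ i : ℤ, b < i → IsZero (Qc.X i) := fun i hi => hab i (Or.inr hi)
  -- ι is a monomorphism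
  have hmonof : ∀ i : ℤ, Mono (ι.f i) := by
    intro i
    by_cases hi : q < i
    · have := hι i hi
      infer_instance
    · exact ⟨fun g h _ => (hT_low i (by omega)).eq_of_tgt g h⟩
  have hmono : Mono ι := by
    refine ⟨fun g h w => ?_⟩
    apply HomologicalComplex.hom_ext
    intro i
    have := hmonof i
    rw [← cancel_mono (ι.f i), ← HomologicalComplex.comp_f, ← HomologicalComplex.comp_f, w]
  -- the short exact sequence T ⟶ P ⟶ cokernel ι
  let S : ShortComplex (CochainComplex (ModuleCat.{u} Aᵐᵒᵖ) ℤ) :=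
    ShortComplex.mk ι (cokernel.π ι) (cokernel.condition ι)
  have hS : S.ShortExact :=
    { exact := S.exact_of_g_is_cokernel (cokernelIsCokernel ι)
      mono_f := hmono
      epi_g := by dsimp [S]; infer_instance }
  have hdist := DerivedCategory.triangleOfSES_distinguished hS
  -- the cokernel is exact in degrees > q
  have hMex : ∀ i : ℤ, q < i → (cokernel ι).ExactAt i := by
    intro i hi
    have := hι i hi
    have hz : IsZero ((cokernel ι).X i) := by
      have e1 : (cokernel ι).X i ≅ cokernel (ι.f i) :=
        PreservesCokernel.iso (HomologicalComplex.eval _ _ i) ι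
      exact IsZero.of_iso (isZero_zero _) (e1 ≪≫ cokernel.ofEpi (ι.f i))
    rw [HomologicalComplex.exactAt_iff]
    exact ShortComplex.exact_of_isZero_X₂ _ hz
  -- the composition with the projection to the cokernel vanishes
  have hcomp : f ≫ DerivedCategory.Q.map (cokernel.π ι) = 0 :=
    stupidTrunc_derivedHom_zero Qc (cokernel ι) q b hproj hQ_low hQ_high hMex _
  obtain ⟨g, hg⟩ := Pretriangulated.Triangle.coyoneda_exact₂ _ hdist f hcomp
  exact ⟨g, hg⟩
end

section
/- Let T be a triangulated category admitting arbitrary small coproducts and let P be a class of compact objects of T. Define classes E_n of objects of T inductively: E_1 consists of all small coproducts of objects of P; for n ≥ 2, an object N lies in E_n if there exists a distinguished triangle N_0 → N → N_1 → ΣN_0 with N_0 ∈ E_a and N_1 ∈ E_b for some a, b ≥ 1 with a + b = n. Let X be a compact object of T, let f : X → Y' be any morphism, and let y : Y → Y' be a morphism whose cone lies in E_n for some n ≥ 1. Then there exist an object X' and morphisms x : X' → X and g : X' → Y such that f ∘ x = y ∘ g and the cone of x lies in the thick triangulated subcategory of T generated by P (the smallest strictly full triangulated subcategory containing P and closed under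 direct summands). -/
/-! STATEMENT 6: Let T be a triangulated category with arbitrary small coproducts and P a
class of compact objects of T. Define E_1 as the class of small coproducts of objects of P,
and, for n ≥ 2, let N ∈ E_n if there is a distinguished triangle N₀ → N → N₁ → ΣN₀ with
N₀ ∈ E_a, N₁ ∈ E_b, a + b = n, a, b ≥ 1. If X is compact, f : X ⟶ Y' is any morphism and
y : Y ⟶ Y' has cone in E_n for some n ≥ 1, then there are x : X' ⟶ X and g : X' ⟶ Y with
f ∘ x = y ∘ g such that the cone of x lies in the thick triangulated subcategory
generated by P. -/

open CategoryTheory Limits Pretriangulated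

universe v u

variable {T : Type u} [Category.{v} T] [Preadditive T] [HasZeroObject T] [HasShift T ℤ]
  [∀ n : ℤ, (shiftFunctor T n).Additive] [Pretriangulated T] [IsTriangulated T]

/-- An object `X` of a (pre)triangulated category is compact if `Hom_T(X, −)` commutes with
arbitrary small coproducts. -/
def IsCompactObj (X : T) : Prop :=
  ∀ J : Type v, PreservesColimitsOfShape (Discrete J) (preadditiveCoyoneda.obj (Opposite.op X))

/-- The classes `E n` of objects of `T`: `E 1` consists of all small coproducts of objects
of `P`; for `a, b ≥ 1`, an object `N` lies in `E (a + b)` whenever there is a distinguished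
triangle `N₀ ⟶ N ⟶ N₁ ⟶ ΣN₀` with `N₀ ∈ E a` and `N₁ ∈ E b`. -/
inductive EClass (P : Set T) : ℕ → T → Prop
  | coprod {J : Type v} (Y : J → T) (hY : ∀ j, Y j ∈ P) [HasCoproduct Y] {N : T}
      (e : N ≅ ∐ Y) : EClass P 1 N
  | ext {a b : ℕ} (ha : 1 ≤ a) (hb : 1 ≤ b) {N₀ N N₁ : T} (f : N₀ ⟶ N) (g : N ⟶ N₁)
      (h : N₁ ⟶ N₀⟦(1 : ℤ)⟧) (hT : Triangle.mk f g h ∈ distTriang T)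
      (h₀ : EClass P a N₀) (h₁ : EClass P b N₁) : EClass P (a + b) N

/-- Membership in the smallest strictly full triangulated subcategory of `T` containing `P`
and closed under direct summands (the thick triangulated subcategory generated by `P`). -/
inductive ThickClosure (P : Set T) : T → Prop
  | of {X : T} (hX : X ∈ P) : ThickClosure P X
  | zero {X : T} (hX : IsZero X) : ThickClosure P X
  | isoClosed {X Y : T} (e : X ≅ Y) (hX : ThickClosure P X) : ThickClosure P Y
  | shift {X : T} (n : ℤ) (hX : ThickClosure P X) : ThickClosure P (X⟦n⟧)
  | ext₂ {X Y Z : T} (f : X ⟶ Y) (g : Y ⟶ Z) (h : Z ⟶ X⟦(1 : ℤ)⟧)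
      (hT : Triangle.mk f g h ∈ distTriang T) (hX : ThickClosure P X) (hZ : ThickClosure P Z) :
      ThickClosure P Y
  | summand {X Z Y : T} [HasBinaryBiproduct X Z] (e : Y ≅ X ⊞ Z) (hY : ThickClosure P Y) :
      ThickClosure P X

def MyCpt (X : T) : Prop :=
  ∀ (J : Type v) (Y : J → T) [HasCoproduct Y],
    (∀ u : X ⟶ ∐ Y, ∃ (s : Finset J) (p : ∀ j, X ⟶ Y j),
        u = ∑ j ∈ s, p j ≫ Sigma.ι Y j) ∧
    (∀ (s : Finset J) (p : ∀ j, X ⟶ Y j), (∑ j ∈ s, p j ≫ Sigma.ι Y j) = 0 →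
        ∀ j ∈ s, p j = 0)

theorem myCpt_of_isCompact {X : T} (hX : IsCompactObj X) : MyCpt X := by
  intro J Y inst
  classical
  haveI := hX J
  let F := preadditiveCoyoneda.obj (Opposite.op X)
  have hc : IsColimit (Cofan.mk (F.obj (∐ Y)) fun j : J => F.map (Sigma.ι Y j)) :=
    isColimitOfHasCoproductOfPreservesColimit F Y
  let φ : (DirectSum J fun j => (X ⟶ Y j)) →+ (X ⟶ ∐ Y) :=
    DirectSum.toAddMonoid (fun j => AddMonoidHom.mk' (fun a => a ≫ Sigma.ι Y j)
      (fun a b => Preadditive.add_comp _ _ _ _ _ _))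
  have hφof : ∀ (j : J) (a : X ⟶ Y j), φ (DirectSum.of _ j a) = a ≫ Sigma.ι Y j := by
    intro j a
    simp [φ, DirectSum.toAddMonoid_of]
  let sψ : Cofan (fun j => F.obj (Y j)) :=
    Cofan.mk (AddCommGrpCat.of (DirectSum J fun j => (X ⟶ Y j)))
      (fun j => AddCommGrpCat.ofHom (DirectSum.of (fun j => (X ⟶ Y j)) j))
  let ψ : F.obj (∐ Y) ⟶ AddCommGrpCat.of (DirectSum J fun j => (X ⟶ Y j)) := hc.desc sψ
  have hfac : ∀ j : J, F.map (Sigma.ι Y j) ≫ ψ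
      = AddCommGrpCat.ofHom (DirectSum.of (fun j => (X ⟶ Y j)) j) := fun j => hc.fac sψ ⟨j⟩
  have h1 : ∀ u : X ⟶ ∐ Y, φ (ψ u) = u := by
    have : ψ ≫ AddCommGrpCat.ofHom φ = 𝟙 (F.obj (∐ Y)) := by
      refine hc.hom_ext fun j => ?_
      obtain ⟨j⟩ := j
      simp only [Cofan.mk_ι_app, Category.comp_id]
      rw [← Category.assoc, hfac j]
      ext a
      exact hφof j a
    intro u
    exact ConcreteCategory.congr_hom this u
  have hmapel : ∀ (j : J) (a : X ⟶ Y j), F.map (Sigma.ι Y j) a = a ≫ Sigma.ι Y j :=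
    fun _ _ => rfl
  have h2 : ∀ g : DirectSum J fun j => (X ⟶ Y j), ψ (φ g) = g := by
    intro g
    induction g using DirectSum.induction_on with
    | zero => rw [map_zero]; exact map_zero (ConcreteCategory.hom ψ)
    | of j a =>
      rw [hφof j a, ← hmapel j a]
      exact ConcreteCategory.congr_hom (hfac j) a
    | add g₁ g₂ ih₁ ih₂ => rw [map_add]; exact (map_add (ConcreteCategory.hom ψ) (φ g₁) (φ g₂)).trans (congrArg₂ (· + ·) ih₁ ih₂)
  constructor
  · intro u
    obtain ⟨g, hg⟩ : ∃ g : DirectSum J fun j => (X ⟶ Y j), φ g = u := ⟨ψ u, h1 u⟩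
    refine ⟨DFinsupp.support g, fun j => g j, ?_⟩
    conv_lhs => rw [← hg, ← DirectSum.sum_support_of g]
    rw [map_sum]
    exact Finset.sum_congr rfl fun j _ => hφof j (g j)
  · intro s p hsum j hj
    have hg : (∑ i ∈ s, DirectSum.of (fun j => (X ⟶ Y j)) i (p i)) = 0 := by
      have := h2 (∑ i ∈ s, DirectSum.of (fun j => (X ⟶ Y j)) i (p i))
      rw [map_sum] at this
      simp only [hφof] at this
      rw [hsum] at this
      exact this.symm.trans (map_zero (ConcreteCategory.hom ψ))
    have : p j = (∑ i ∈ s, DirectSum.of (fun j => (X ⟶ Y j)) i (p i)) j := by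
      rw [DFinsupp.finset_sum_apply]
      rw [Finset.sum_eq_single_of_mem j hj]
      · rw [DirectSum.of_eq_same]
      · intro i _ hij
        exact DirectSum.of_eq_of_ne _ _ _ (Ne.symm hij)
    rw [this, hg]
    rfl

theorem myCpt_shift {X : T} (k : ℤ) (hX : MyCpt X) : MyCpt (X⟦k⟧) := by
  intro J Y instY
  haveI : HasCoproduct (fun j => (Y j)⟦(-k : ℤ)⟧) :=
    hasColimit_of_iso (Discrete.natIso (fun j => Iso.refl _) :
      Discrete.functor (fun j => (Y j)⟦(-k : ℤ)⟧) ≅ Discrete.functor Y ⋙ shiftFunctor T (-k))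
  let adj := (shiftEquiv T k).toAdjunction
  let σ : ∀ W : T, (X⟦k⟧ ⟶ W) ≃+ (X ⟶ W⟦(-k : ℤ)⟧) := fun W =>
    { adj.homEquiv X W with
      map_add' := fun a b => by
        show (adj.homEquiv X W) (a + b) = (adj.homEquiv X W) a + (adj.homEquiv X W) b
        have h : ∀ f : X⟦k⟧ ⟶ W, adj.homEquiv X W f
            = adj.unit.app X ≫ (shiftFunctor T (-k)).map f := fun f => by
          exact adj.homEquiv_unit X W f
        rw [h, h, h]; erw [Functor.map_add]; exact Preadditive.comp_add _ _ _ _ _ _ }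
  have hσ : ∀ (W W' : T) (a : X⟦k⟧ ⟶ W) (g : W ⟶ W'),
      σ W' (a ≫ g) = σ W a ≫ (shiftFunctor T (-k)).map g := fun W W' a g =>
    adj.homEquiv_naturality_right a g
  have hσsymm : ∀ (W W' : T) (b : X ⟶ W⟦(-k : ℤ)⟧) (g : W ⟶ W'),
      (σ W').symm (b ≫ (shiftFunctor T (-k)).map g) = (σ W).symm b ≫ g := fun W W' b g =>
    adj.homEquiv_naturality_right_symm b g
  let c : ((∐ Y)⟦(-k : ℤ)⟧) ≅ ∐ (fun j => (Y j)⟦(-k : ℤ)⟧) :=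
    PreservesCoproduct.iso (shiftFunctor T (-k)) Y
  have hι : ∀ j : J, Sigma.ι (fun j => (Y j)⟦(-k : ℤ)⟧) j ≫ c.inv
      = (shiftFunctor T (-k)).map (Sigma.ι Y j) := by
    intro j
    rw [PreservesCoproduct.inv_hom]
    exact ι_comp_sigmaComparison (shiftFunctor T (-k)) Y j
  constructor
  · intro u
    obtain ⟨s, p, hp⟩ := (hX J (fun j => (Y j)⟦(-k : ℤ)⟧)).1 (σ _ u ≫ c.hom)
    have hσu : σ _ u = ∑ j ∈ s, p j ≫ (shiftFunctor T (-k)).map (Sigma.ι Y j) := by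
      rw [← Category.comp_id (σ _ u), ← c.hom_inv_id, ← Category.assoc, hp,
        Preadditive.sum_comp]
      exact Finset.sum_congr rfl fun j _ => by rw [Category.assoc, hι j]
    refine ⟨s, fun j => (σ (Y j)).symm (p j), ?_⟩
    have := congrArg (σ (∐ Y)).symm hσu
    rw [AddEquiv.symm_apply_apply, map_sum] at this
    rw [this]
    exact Finset.sum_congr rfl fun j _ => hσsymm _ _ (p j) (Sigma.ι Y j)
  · intro s p hsum j hj
    have h0 : (∑ j ∈ s, σ (Y j) (p j) ≫ Sigma.ι (fun j => (Y j)⟦(-k : ℤ)⟧) j) ≫ c.inv = 0 := by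
      rw [Preadditive.sum_comp]
      have : ∑ j ∈ s, σ (Y j) (p j) ≫ Sigma.ι (fun j => (Y j)⟦(-k : ℤ)⟧) j ≫ c.inv
          = σ _ (∑ j ∈ s, p j ≫ Sigma.ι Y j) := by
        rw [map_sum]
        exact Finset.sum_congr rfl fun j _ => by rw [hι j, ← hσ]
      simpa [hsum] using this.trans (by rw [hsum, map_zero])
    have h0' : (∑ j ∈ s, σ (Y j) (p j) ≫ Sigma.ι (fun j => (Y j)⟦(-k : ℤ)⟧) j) = 0 := by
      have := congrArg (fun t => t ≫ c.hom) h0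
      simpa using this
    have := (hX J (fun j => (Y j)⟦(-k : ℤ)⟧)).2 s (fun j => σ (Y j) (p j)) h0' j hj
    have := congrArg (σ (Y j)).symm this
    rwa [AddEquiv.symm_apply_apply, map_zero] at this

theorem myCpt_zero {X : T} (hX : IsZero X) : MyCpt X := by
  intro J Y instY
  constructor
  · intro u
    refine ⟨∅, fun j => 0, ?_⟩
    rw [Finset.sum_empty]
    exact hX.eq_of_src u 0
  · intro s p hsum j hj
    exact hX.eq_of_src _ _

theorem myCpt_ext {A B C : T} {f : A ⟶ B} {g : B ⟶ C} {h : C ⟶ A⟦(1 : ℤ)⟧}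
    (hT : Triangle.mk f g h ∈ distTriang T) (hA : MyCpt A) (hC : MyCpt C) : MyCpt B := by
  classical
  have hA1 : MyCpt (A⟦(1 : ℤ)⟧) := myCpt_shift 1 hA
  have hCm : MyCpt (C⟦(-1 : ℤ)⟧) := myCpt_shift (-1) hC
  intro J Y instY
  have hTR : (Triangle.mk f g h).invRotate ∈ distTriang T := inv_rot_of_distTriang _ hT
  have hTRR : (Triangle.mk f g h).rotate ∈ distTriang T := rot_of_distTriang _ hT
  set α : C⟦(-1 : ℤ)⟧ ⟶ A := (Triangle.mk f g h).invRotate.mor₁ with hα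
  have hαf : α ≫ f = 0 := comp_distTriang_mor_zero₁₂ _ hTR
  constructor
  · intro u
    obtain ⟨s, p, hp⟩ := (hA J Y).1 (f ≫ u)
    have hvan : ∀ j ∈ s, α ≫ p j = 0 := by
      refine (hCm J Y).2 s (fun j => α ≫ p j) ?_
      have : ∑ j ∈ s, (α ≫ p j) ≫ Sigma.ι Y j = α ≫ ∑ j ∈ s, p j ≫ Sigma.ι Y j := by
        rw [Preadditive.comp_sum]; simp [Category.assoc]
      rw [this, ← hp, ← Category.assoc, hαf, Limits.zero_comp]
    have hlift : ∀ j ∈ s, ∃ q : B ⟶ Y j, p j = f ≫ q := fun j hj =>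
      Triangle.yoneda_exact₂ _ hTR (p j) (hvan j hj)
    choose q hq using fun j (hj : j ∈ s) => hlift j hj
    let q' : ∀ j, B ⟶ Y j := fun j => if hj : j ∈ s then q j hj else 0
    have hfu' : f ≫ (u - ∑ j ∈ s, q' j ≫ Sigma.ι Y j) = 0 := by
      rw [Preadditive.comp_sub, Preadditive.comp_sum, hp]
      rw [sub_eq_zero]
      refine Finset.sum_congr rfl fun j hj => ?_
      rw [← Category.assoc]
      congr 1
      rw [show q' j = q j hj from dif_pos hj]
      exact hq j hj
    obtain ⟨w, hw⟩ := Triangle.yoneda_exact₂ _ hT _ hfu'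
    rw [show (Triangle.mk f g h).mor₂ = g from rfl] at hw
    obtain ⟨s', r, hr⟩ := (hC J Y).1 w
    refine ⟨s ∪ s', fun j => (if j ∈ s then q' j else 0) + (if j ∈ s' then g ≫ r j else 0), ?_⟩
    have expand : ∑ j ∈ s ∪ s',
        ((if j ∈ s then q' j else 0) + (if j ∈ s' then g ≫ r j else 0)) ≫ Sigma.ι Y j
        = (∑ j ∈ s, q' j ≫ Sigma.ι Y j) + ∑ j ∈ s', (g ≫ r j) ≫ Sigma.ι Y j := by
      simp only [Preadditive.add_comp, Finset.sum_add_distrib, ite_comp, Limits.zero_comp]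
      rw [Finset.sum_ite_mem, Finset.sum_ite_mem, Finset.union_inter_cancel_left,
        Finset.union_inter_cancel_right]
    rw [expand]
    have : u = (u - ∑ j ∈ s, q' j ≫ Sigma.ι Y j) + ∑ j ∈ s, q' j ≫ Sigma.ι Y j := by abel
    rw [this, hw, hr]
    erw [Preadditive.comp_sum]
    rw [add_comm]
    congr 1
    exact Finset.sum_congr rfl fun j _ => (Category.assoc _ _ _).symm
  · intro s p hsum j₀ hj₀
    have hfp : ∀ j ∈ s, f ≫ p j = 0 := by
      refine (hA J Y).2 s (fun j => f ≫ p j) ?_ 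
      have : ∑ j ∈ s, (f ≫ p j) ≫ Sigma.ι Y j = f ≫ ∑ j ∈ s, p j ≫ Sigma.ι Y j := by
        rw [Preadditive.comp_sum]; simp [Category.assoc]
      rw [this, hsum, Limits.comp_zero]
    have hlift : ∀ j ∈ s, ∃ r : C ⟶ Y j, p j = g ≫ r := fun j hj =>
      Triangle.yoneda_exact₂ _ hT (p j) (hfp j hj)
    choose r hrr using fun j (hj : j ∈ s) => hlift j hj
    let r' : ∀ j, C ⟶ Y j := fun j => if hj : j ∈ s then r j hj else 0
    have hgsum : g ≫ (∑ j ∈ s, r' j ≫ Sigma.ι Y j) = 0 := by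
      rw [Preadditive.comp_sum, ← hsum]
      refine Finset.sum_congr rfl fun j hj => ?_
      rw [← Category.assoc]
      congr 1
      rw [show r' j = r j hj from dif_pos hj]
      exact (hrr j hj).symm
    obtain ⟨t, ht⟩ := Triangle.yoneda_exact₂ _ hTRR _ hgsum
    obtain ⟨s', t', ht'⟩ := (hA1 J Y).1 t
    have hd : ∀ j ∈ s ∪ s',
        ((if j ∈ s then r' j else 0) - (if j ∈ s' then h ≫ t' j else 0)) = 0 := by
      refine (hC J Y).2 (s ∪ s') _ ?_
      simp only [Preadditive.sub_comp, Finset.sum_sub_distrib, ite_comp, Limits.zero_comp]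
      rw [Finset.sum_ite_mem, Finset.sum_ite_mem, Finset.union_inter_cancel_left,
        Finset.union_inter_cancel_right]
      rw [sub_eq_zero]
      rw [ht, ht']
      erw [Preadditive.comp_sum]
      simp [Category.assoc]
      rfl
    have hd0 := hd j₀ (Finset.mem_union_left _ hj₀)
    rw [if_pos hj₀, sub_eq_zero] at hd0
    have hpj : p j₀ = g ≫ r' j₀ := by
      rw [show r' j₀ = r j₀ hj₀ from dif_pos hj₀]
      exact hrr j₀ hj₀
    rw [hpj, hd0]
    by_cases hj' : j₀ ∈ s'
    · have hgh : g ≫ h = 0 := comp_distTriang_mor_zero₂₃ _ hT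
      rw [if_pos hj', ← Category.assoc, hgh, Limits.zero_comp]
    · rw [if_neg hj', Limits.comp_zero]

open ZeroObject in
theorem step_lemma (P : Set T) {J : Type v} (Z : J → T)
    (hZc : ∀ j, MyCpt (Z j)) (hZt : ∀ j, ThickClosure P (Z j))
    (s : Finset J) :
    ∀ (X : T), MyCpt X → ∀ (p : ∀ j, X ⟶ Z j),
    ∃ (X' : T) (x : X' ⟶ X) (C : T) (w : X ⟶ C) (z : C ⟶ X'⟦(1 : ℤ)⟧),
      (Triangle.mk x w z ∈ distTriang T) ∧ ThickClosure P C ∧ MyCpt X' ∧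
      ∀ j ∈ s, x ≫ p j = 0 := by
  classical
  induction s using Finset.induction_on with
  | empty =>
    intro X hX p
    exact ⟨X, 𝟙 X, 0, 0, 0, contractible_distinguished X,
      ThickClosure.zero (isZero_zero T), hX, by simp⟩
  | insert j₀ s'' hj₀ ih =>
    intro X hX p
    obtain ⟨X₁, x₁, C₁, w₁, z₁, tri₁, th₁, cpt₁, van₁⟩ := ih X hX p
    obtain ⟨D, gD, hD, memD⟩ := distinguished_cocone_triangle (x₁ ≫ p j₀)
    have memIR : (Triangle.mk (x₁ ≫ p j₀) gD hD).invRotate ∈ distTriang T :=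
      inv_rot_of_distTriang _ memD
    set TR := (Triangle.mk (x₁ ≫ p j₀) gD hD).invRotate with hTRdef
    obtain ⟨C, wC, zC, memC⟩ := distinguished_cocone_triangle (TR.mor₁ ≫ x₁)
    have O := Triangulated.someOctahedron rfl memIR tri₁ memC
    refine ⟨TR.obj₁, TR.mor₁ ≫ x₁, C, wC, zC, memC, ?_, ?_, ?_⟩
    · exact ThickClosure.ext₂ O.m₁ O.m₃ _ O.mem (hZt j₀) th₁
    · exact myCpt_ext (inv_rot_of_distTriang _ memIR) (myCpt_shift (-1) (hZc j₀)) cpt₁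
    · intro j hj
      rcases Finset.mem_insert.mp hj with h | h
      · subst h
        have h12 : TR.mor₁ ≫ (x₁ ≫ p j) = 0 := comp_distTriang_mor_zero₁₂ _ memIR
        exact (Category.assoc _ _ _).trans h12
      · exact (Category.assoc _ _ _).trans (by erw [van₁ j h, Limits.comp_zero])

theorem main_aux [HasCoproducts.{v} T] (P : Set T) (hP : ∀ Z ∈ P, MyCpt Z)
    {n : ℕ} {N : T} (hN : EClass P n N) :
    ∀ (X Y Y' : T) (f : X ⟶ Y') (y : Y ⟶ Y') (M : T) (e : M ≅ N)
      (u : Y' ⟶ M) (v : M ⟶ Y⟦(1 : ℤ)⟧),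
      MyCpt X → (Triangle.mk y u v ∈ distTriang T) →
      ∃ (X' : T) (x : X' ⟶ X) (g : X' ⟶ Y) (C : T) (w : X ⟶ C) (z : C ⟶ X'⟦(1 : ℤ)⟧),
        x ≫ f = g ≫ y ∧ (Triangle.mk x w z ∈ distTriang T) ∧ ThickClosure P C ∧ MyCpt X' := by
  induction hN with
  | @coprod J Yf hYf instYf N0 e0 =>
    intro X Y Y' f y M e u v hX hTri
    obtain ⟨s, p, hp⟩ := (hX J Yf).1 (f ≫ u ≫ e.hom ≫ e0.hom)
    obtain ⟨X', x, C, w, z, triX, thC, cptX', van⟩ :=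
      step_lemma P Yf (fun j => hP _ (hYf j)) (fun j => ThickClosure.of (hYf j)) s X hX p
    have h0 : x ≫ f ≫ u ≫ e.hom ≫ e0.hom = 0 := by
      rw [hp, Preadditive.comp_sum]
      refine Finset.sum_eq_zero fun j hj => ?_
      rw [← Category.assoc, van j hj, Limits.zero_comp]
    have h1 : (x ≫ f) ≫ u = 0 := by
      have : (x ≫ f) ≫ u = (x ≫ f ≫ u ≫ e.hom ≫ e0.hom) ≫ e0.inv ≫ e.inv := by
        simp [Category.assoc]
      rw [this, h0, Limits.zero_comp]
    obtain ⟨g, hg⟩ := Triangle.coyoneda_exact₂ _ hTri (x ≫ f) h1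
    exact ⟨X', x, g, C, w, z, hg, triX, thC, cptX'⟩
  | @ext a b ha hb N₀ N N₁ pN qN rN hTN h₀ h₁ ih₀ ih₁ =>
    intro X Y Y' f y M e u v hX hTri
    have hTM : Triangle.mk (pN ≫ e.inv) (e.hom ≫ qN) rN ∈ distTriang T := by
      refine Pretriangulated.isomorphic_distinguished _ hTN _ ?_
      exact Triangle.isoMk _ _ (Iso.refl _) e (Iso.refl _) (by erw [Category.assoc, e.inv_hom_id, Category.comp_id, Category.id_comp]; rfl)
        (by erw [Category.comp_id]; rfl) (by
          exact ((congrArg (rN ≫ ·) ((shiftFunctor T 1).map_id N₀)).trans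
            ((Category.comp_id rN).trans (Category.id_comp rN).symm)))
    have hTS : (Triangle.shiftFunctor T (-1)).obj
        (Triangle.mk (pN ≫ e.inv) (e.hom ≫ qN) rN) ∈ distTriang T :=
      Triangle.shift_distinguished _ hTM (-1)
    set TS := (Triangle.shiftFunctor T (-1)).obj
        (Triangle.mk (pN ≫ e.inv) (e.hom ≫ qN) rN) with hTSdef
    have hTRI : (Triangle.mk y u v).invRotate ∈ distTriang T := inv_rot_of_distTriang _ hTri
    set TRI := (Triangle.mk y u v).invRotate with hTRIdef
    obtain ⟨Y'', c, d, memY''⟩ := distinguished_cocone_triangle (TS.mor₁ ≫ TRI.mor₁)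
    have O := Triangulated.someOctahedron rfl hTS hTRI memY''
    have hTB : (Triangle.mk O.m₁ O.m₃ _).rotate ∈ distTriang T :=
      rot_of_distTriang _ O.mem
    obtain ⟨X₁, x₁, g₁, C₁, w₁, z₁, fac₁, triX₁, thC₁, cpt₁⟩ :=
      ih₁ X Y'' Y' f O.m₃ _ ((shiftFunctorCompIsoId T (-1) 1 (by ring)).app N₁) _ _ hX hTB
    have hTC : (Triangle.mk (TS.mor₁ ≫ TRI.mor₁) c d).rotate ∈ distTriang T :=
      rot_of_distTriang _ memY''
    obtain ⟨X₂, x₂, g₂, C₂, w₂, z₂, fac₂, triX₂, thC₂, cpt₂⟩ :=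
      ih₀ X₁ Y Y'' g₁ c _ ((shiftFunctorCompIsoId T (-1) 1 (by ring)).app N₀) _ _ cpt₁ hTC
    obtain ⟨XC, wXC, zXC, memXC⟩ := distinguished_cocone_triangle (x₂ ≫ x₁)
    have O₂ := Triangulated.someOctahedron rfl triX₂ triX₁ memXC
    refine ⟨X₂, x₂ ≫ x₁, g₂, XC, wXC, zXC, ?_, memXC,
      ThickClosure.ext₂ O₂.m₁ O₂.m₃ _ O₂.mem thC₂ thC₁, cpt₂⟩
    calc (x₂ ≫ x₁) ≫ f = x₂ ≫ (x₁ ≫ f) := by rw [Category.assoc]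
    _ = g₂ ≫ y := by
      erw [fac₁, ← Category.assoc, fac₂, Category.assoc, O.comm₃]
      rfl

/-- STATEMENT 6. -/
theorem factorization_through_thick_closure [HasCoproducts.{v} T]
    (P : Set T) (hP : ∀ Z ∈ P, IsCompactObj Z)
    (X Y Y' : T) (hX : IsCompactObj X) (f : X ⟶ Y') (y : Y ⟶ Y')
    (n : ℕ) (hn : 1 ≤ n)
    (N : T) (u : Y' ⟶ N) (v : N ⟶ Y⟦(1 : ℤ)⟧)
    (hNtri : Triangle.mk y u v ∈ distTriang T) (hN : EClass P n N) :
    ∃ (X' : T) (x : X' ⟶ X) (g : X' ⟶ Y) (C : T) (w : X ⟶ C) (z : C ⟶ X'⟦(1 : ℤ)⟧),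
      x ≫ f = g ≫ y ∧ (Triangle.mk x w z ∈ distTriang T) ∧ ThickClosure P C := by
  obtain ⟨X', x, g, C, w, z, h1, h2, h3, -⟩ :=
    main_aux P (fun Z hZ => myCpt_of_isCompact (hP Z hZ)) hN X Y Y' f y N (Iso.refl N) u v
      (myCpt_of_isCompact hX) hNtri
  exact ⟨X', x, g, C, w, z, h1, h2, h3⟩
end

section
/- Let k be a field and A a finite field extension of k. Then the ring A ⊗_k A is self-injective: A ⊗_k A is injective as a module over itself. -/
/-! STATEMENT 11: Let k be a field and A a finite field extension of k. Then the ring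
A ⊗_k A is self-injective: A ⊗_k A is injective as a module over itself. -/

open TensorProduct

/-- A finite-dimensional commutative algebra with a nondegenerate trace form is self-injective. -/
theorem injective_of_pairing (k B : Type*) [Field k] [CommRing B] [Algebra k B]
    [FiniteDimensional k B] (lam : B →ₗ[k] k)
    (hlam : ∀ z : B, (∀ b : B, lam (b * z) = 0) → z = 0) :
    Module.Injective B B := by
  set Φ : B →ₗ[k] Module.Dual k B :=
    (LinearMap.llcomp k B B k lam).comp (LinearMap.mul k B) with hΦ
  have hΦapp : ∀ c b : B, Φ c b = lam (c * b) := fun c b => rfl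
  have hinj : Function.Injective Φ := by
    intro c c' h
    rw [← sub_eq_zero]
    refine hlam _ fun b => ?_
    have := congrArg (fun f : Module.Dual k B => f b) h
    simp only [hΦapp] at this
    rw [mul_comm, sub_mul, map_sub, this, sub_self]
  have hsurj : Function.Surjective Φ :=
    (LinearMap.injective_iff_surjective_of_finrank_eq_finrank
      (Subspace.dual_finrank_eq).symm).mp hinj
  refine Module.Baer.injective ?_
  intro I g
  obtain ⟨π, hπ⟩ := (Submodule.restrictScalars k I).subtype.exists_leftInverse_of_injective
      (Submodule.ker_subtype _)
  set ψ : B →ₗ[k] k := (lam ∘ₗ (g.restrictScalars k)) ∘ₗ π with hψ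
  have hψapp : ∀ w : Submodule.restrictScalars k I, ψ (w : B) = lam (g w) := by
    intro w
    have h1 : π ((Submodule.restrictScalars k I).subtype w) = w :=
      congrArg (fun f => f w) hπ
    calc ψ (w : B)
        = lam ((g.restrictScalars k) (π ((Submodule.restrictScalars k I).subtype w))) := rfl
      _ = lam ((g.restrictScalars k) w) := by rw [h1]
      _ = lam (g w) := rfl
  obtain ⟨c, hc⟩ := hsurj ψ
  refine ⟨LinearMap.toSpanSingleton B B c, fun x mem => ?_⟩
  rw [← sub_eq_zero]
  refine hlam _ fun b => ?_
  have h1 : lam (b * g ⟨x, mem⟩) = ψ (b * x) := by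
    have : b * g ⟨x, mem⟩ = g (b • (⟨x, mem⟩ : I)) := by
      rw [map_smul]; exact (smul_eq_mul _ _).symm
    rw [this]
    have := hψapp (b • (⟨x, mem⟩ : Submodule.restrictScalars k I))
    exact this.symm
  have h2 : lam (b * LinearMap.toSpanSingleton B B c x) = ψ (b * x) := by
    rw [← hc, hΦapp]
    simp [LinearMap.toSpanSingleton_apply, smul_eq_mul]
    ring_nf
  rw [mul_sub, map_sub, h1, h2, sub_self]

theorem tensorProduct_self_injective
    (k A : Type*) [Field k] [Field A] [Algebra k A] [FiniteDimensional k A] :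
    Module.Injective (A ⊗[k] A) (A ⊗[k] A) := by
  classical
  -- a nonzero functional on A
  obtain ⟨s, b⟩ := Module.Free.exists_basis (R := k) (M := A)
  have hs : Nonempty s := by
    rcases isEmpty_or_nonempty s with h | h
    · exfalso
      have : Subsingleton A := b.repr.toEquiv.subsingleton
      exact one_ne_zero (Subsingleton.elim (1 : A) 0)
    · exact h
  obtain ⟨i0⟩ := hs
  set μ : A →ₗ[k] k := b.coord i0 with hμdef
  have hμne : μ (b i0) = 1 := by simp [hμdef]
  -- Φ_A : A → Dual
  set ΦA : A →ₗ[k] Module.Dual k A :=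
    (LinearMap.llcomp k A A k μ).comp (LinearMap.mul k A) with hΦA
  have hΦAapp : ∀ c x : A, ΦA c x = μ (c * x) := fun c x => rfl
  have hΦAinj : Function.Injective ΦA := by
    intro a a' h
    by_contra hne
    have hd : a - a' ≠ 0 := sub_ne_zero.mpr hne
    have := congrArg (fun f : Module.Dual k A => f ((a - a')⁻¹ * b i0)) (sub_eq_zero.mpr h)
    have h0 : ΦA (a - a') ((a - a')⁻¹ * b i0) = 0 := by
      rw [map_sub] at *
      simpa [sub_eq_zero.mpr h] using congrArg (fun f : Module.Dual k A => f ((a - a')⁻¹ * b i0))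
        (sub_eq_zero.mpr (show ΦA a = ΦA a' from h))
    rw [hΦAapp, ← mul_assoc, mul_inv_cancel₀ hd, one_mul, hμne] at h0
    exact one_ne_zero h0
  set lam : A ⊗[k] A →ₗ[k] k := (TensorProduct.lid k k).toLinearMap ∘ₗ TensorProduct.map μ μ
    with hlamdef
  have hlamapp : ∀ x y : A, lam (x ⊗ₜ[k] y) = μ x * μ y := by
    intro x y
    simp [hlamdef, TensorProduct.lid_tmul, smul_eq_mul]
  -- Φ_B factors through dualDistrib
  set ΦB : (A ⊗[k] A) →ₗ[k] Module.Dual k (A ⊗[k] A) :=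
    (LinearMap.llcomp k (A ⊗[k] A) (A ⊗[k] A) k lam).comp (LinearMap.mul k (A ⊗[k] A)) with hΦB
  have hΦBapp : ∀ c b' : A ⊗[k] A, ΦB c b' = lam (c * b') := fun c b' => rfl
  have hfactor : ΦB = (TensorProduct.dualDistrib k A A) ∘ₗ TensorProduct.map ΦA ΦA := by
    apply TensorProduct.ext'
    intro x y
    apply TensorProduct.ext'
    intro x' y'
    simp only [LinearMap.comp_apply, TensorProduct.map_tmul, TensorProduct.dualDistrib_apply]
    rw [hΦBapp, hΦAapp, hΦAapp, Algebra.TensorProduct.tmul_mul_tmul, hlamapp]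
  have hmapinj : Function.Injective (TensorProduct.map ΦA ΦA) := by
    rw [← LinearMap.lTensor_comp_rTensor]
    exact (Module.Flat.lTensor_preserves_injective_linearMap _ hΦAinj).comp
      (Module.Flat.rTensor_preserves_injective_linearMap _ hΦAinj)
  have hdualinj : Function.Injective (TensorProduct.dualDistrib k A A) := by
    have : (TensorProduct.dualDistrib k A A) =
        (TensorProduct.dualDistribEquiv k A A).toLinearMap := rfl
    rw [this]
    exact (TensorProduct.dualDistribEquiv k A A).injective
  have hΦBinj : Function.Injective ΦB := by
    rw [hfactor]
    exact hdualinj.comp hmapinj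
  refine injective_of_pairing k (A ⊗[k] A) lam fun z hz => ?_
  have : ΦB z = 0 := by
    apply LinearMap.ext
    intro b'
    rw [hΦBapp, mul_comm]
    exact hz b'
  exact hΦBinj (by rw [this, map_zero])
end

section
/- Let k be a field and A a finite field extension of k which is not separable over k. Then A, regarded as a module over the enveloping algebra A ⊗_k A via the multiplication map (a ⊗ b) · c = acb = abc, is not a projective A ⊗_k A-module. -/
/-! STATEMENT 12: Let k be a field and A a finite field extension of k which is not
separable over k. Then A, regarded as a module over the enveloping algebra A ⊗_k A via
the multiplication map (a ⊗ b) · c = abc, is not a projective A ⊗_k A-module. -/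

open TensorProduct

theorem not_projective_of_not_separable
    (k A : Type*) [Field k] [Field A] [Algebra k A] [FiniteDimensional k A]
    (h : ¬ Algebra.IsSeparable k A) :
    letI : Module (A ⊗[k] A) A :=
      Module.compHom A (Algebra.TensorProduct.lmul' k (S := A)).toRingHom
    ¬ Module.Projective (A ⊗[k] A) A := by
  letI : Module (A ⊗[k] A) A :=
    Module.compHom A (Algebra.TensorProduct.lmul' k (S := A)).toRingHom
  intro hproj
  apply h
  have hEss : Algebra.EssFiniteType k A := inferInstance
  suffices hur : Algebra.FormallyUnramified k A by
    have := Algebra.FormallyUnramified.finite_of_free (R := k) (S := A)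
    rw [← separableClosure.eq_top_iff]
    have := Algebra.FormallyUnramified.of_restrictScalars k (separableClosure k A) A
    have := Algebra.EssFiniteType.of_comp k (separableClosure k A) A
    ext x
    show _ ↔ _ ∈ (⊤ : Subring _)
    rw [← Algebra.FormallyUnramified.range_eq_top_of_isPurelyInseparable
      (separableClosure k A) A]
    simp
  rw [Algebra.FormallyUnramified.iff_exists_tensorProduct]
  -- lmul' as an (A ⊗ A)-linear map
  have hsmul : ∀ (r : A ⊗[k] A) (a : A),
      r • a = Algebra.TensorProduct.lmul' k (S := A) r * a := fun _ _ => rfl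
  let f : (A ⊗[k] A) →ₗ[A ⊗[k] A] A :=
    { toFun := Algebra.TensorProduct.lmul' k (S := A)
      map_add' := map_add _
      map_smul' := by
        intro r x
        simp only [smul_eq_mul, map_mul, RingHom.id_apply, hsmul] }
  have hsurj : Function.Surjective f := fun a =>
    ⟨a ⊗ₜ 1, by simp [f, Algebra.TensorProduct.lmul'_apply_tmul]⟩
  obtain ⟨sec, hsec⟩ := Module.projective_lifting_property f LinearMap.id hsurj
  refine ⟨sec 1, fun s => ?_, ?_⟩
  · have h1 : ((1 : A) ⊗ₜ[k] s - s ⊗ₜ[k] (1 : A)) • (1 : A) = 0 := by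
      rw [hsmul]
      simp [Algebra.TensorProduct.lmul'_apply_tmul]
    calc ((1 : A) ⊗ₜ[k] s - s ⊗ₜ[k] (1 : A)) * sec 1
        = sec (((1 : A) ⊗ₜ[k] s - s ⊗ₜ[k] (1 : A)) • (1 : A)) := by
          rw [map_smul]; rfl
      _ = 0 := by rw [h1, map_zero]
  · have := congrArg (fun g => g 1) hsec
    simpa [f] using this
end
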